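/- Let d ≥ 2, let (K_i)_{i ∈ J} be a finite family of d×d complex matrices with ∑_i K_i† K_i = I, let (σ_μ)_{μ=0}^{d²−1} be an orthonormal Hermitian basis with σ₀ = I/√d, and set Q_μ = ∑_i K_i† σ_μ K_i. Let a₁, a₂, b₁, …, b₅ be the quantities α₁, α₂, β₁, …, β₅ of the family (Q_μ)_{μ=0}^{d²−1}. Then max_{u ∈ {1,…,5}} |b_u| < max_{i,j ∈ {1,2}} |a_i · a_j|, and consequently the ratio (max_u |b_u|)^N / (max_{i,j} |a_i a_j|)^N tends to 0 as N → ∞ (exponential decay of the variance-to-mean-squared ratio for the N-fold product channel). -/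

import Mathlib

open Matrix Finset

/-- Real part of the trace of a complex matrix (the traces in question are real
for Hermitian matrices). -/
noncomputable def rtr {α : Type} [Fintype α] (M : Matrix α α ℂ) : ℝ :=
  (Matrix.trace M).re

/-- α₁ = ∑_μ (Tr R_μ)². -/
noncomputable def alpha1 {α I : Type} [Fintype α] [Fintype I]
    (R : I → Matrix α α ℂ) : ℝ := ∑ μ, (rtr (R μ)) ^ 2

/-- α₂ = ∑_μ Tr(R_μ²). -/
noncomputable def alpha2 {α I : Type} [Fintype α] [Fintype I]
    (R : I → Matrix α α ℂ) : ℝ := ∑ μ, rtr (R μ * R μ)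

/-- β₁ = ∑_{μ,ν} (Tr(R_μ R_ν))². -/
noncomputable def beta1 {α I : Type} [Fintype α] [Fintype I]
    (R : I → Matrix α α ℂ) : ℝ := ∑ μ, ∑ ν, (rtr (R μ * R ν)) ^ 2

/-- β₂ = ∑_{μ,ν} Tr(R_μ R_ν)·Tr(R_μ)·Tr(R_ν). -/
noncomputable def beta2 {α I : Type} [Fintype α] [Fintype I]
    (R : I → Matrix α α ℂ) : ℝ := ∑ μ, ∑ ν, rtr (R μ * R ν) * rtr (R μ) * rtr (R ν)

/-- β₃ = ∑_{μ,ν} Tr(R_μ R_ν²)·Tr(R_μ). -/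
noncomputable def beta3 {α I : Type} [Fintype α] [Fintype I]
    (R : I → Matrix α α ℂ) : ℝ := ∑ μ, ∑ ν, rtr (R μ * (R ν * R ν)) * rtr (R μ)

/-- β₄ = ∑_{μ,ν} Tr(R_μ² R_ν²). -/
noncomputable def beta4 {α I : Type} [Fintype α] [Fintype I]
    (R : I → Matrix α α ℂ) : ℝ := ∑ μ, ∑ ν, rtr (R μ * R μ * (R ν * R ν))

/-- β₅ = ∑_{μ,ν} Tr(R_μ R_ν R_μ R_ν). -/
noncomputable def beta5 {α I : Type} [Fintype α] [Fintype I]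
    (R : I → Matrix α α ℂ) : ℝ := ∑ μ, ∑ ν, rtr (R μ * R ν * R μ * R ν)

/-- max_{i,j ∈ {1,2}} |α_i α_j|. -/
noncomputable def maxAlpha {α I : Type} [Fintype α] [Fintype I]
    (R : I → Matrix α α ℂ) : ℝ :=
  max (max |alpha1 R * alpha1 R| |alpha1 R * alpha2 R|)
      (max |alpha2 R * alpha1 R| |alpha2 R * alpha2 R|)

/-- max_{u ∈ {1,…,5}} |β_u|. -/
noncomputable def maxBeta {α I : Type} [Fintype α] [Fintype I]
    (R : I → Matrix α α ℂ) : ℝ :=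
  max |beta1 R| (max |beta2 R| (max |beta3 R| (max |beta4 R| |beta5 R|)))

namespace QCAux

variable {d : ℕ}

noncomputable def vec (M : Matrix (Fin d) (Fin d) ℂ) : EuclideanSpace ℂ (Fin d × Fin d) :=
  WithLp.toLp 2 (fun p : Fin d × Fin d => M p.1 p.2)

lemma inner_vec (A B : Matrix (Fin d) (Fin d) ℂ) :
    (inner ℂ (vec A) (vec B) : ℂ) = Matrix.trace (Aᴴ * B) := by
  simp only [PiLp.inner_apply, RCLike.inner_apply, vec, PiLp.toLp_apply, Matrix.trace, Matrix.diag,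
    Matrix.mul_apply, Matrix.conjTranspose_apply]
  rw [Fintype.sum_prod_type]
  rw [Finset.sum_comm]
  simp [mul_comm]

lemma norm_vec_sq (A : Matrix (Fin d) (Fin d) ℂ) :
    ‖vec A‖ ^ 2 = (Matrix.trace (Aᴴ * A)).re := by
  rw [← inner_vec]
  exact_mod_cast (inner_self_eq_norm_sq (𝕜 := ℂ) (vec A)).symm

lemma abs_re_trace_le (A B : Matrix (Fin d) (Fin d) ℂ) :
    |(Matrix.trace (Aᴴ * B)).re| ≤ ‖vec A‖ * ‖vec B‖ := by
  rw [← inner_vec]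
  calc |(inner ℂ (vec A) (vec B) : ℂ).re| ≤ ‖(inner ℂ (vec A) (vec B) : ℂ)‖ :=
        Complex.abs_re_le_norm _
    _ ≤ ‖vec A‖ * ‖vec B‖ := norm_inner_le_norm _ _

lemma vec_mul_le (A B : Matrix (Fin d) (Fin d) ℂ) :
    ‖vec (A * B)‖ ≤ ‖vec A‖ * ‖vec B‖ := by
  have h1 : ∀ M : Matrix (Fin d) (Fin d) ℂ, ‖vec M‖ ^ 2 = ∑ p : Fin d × Fin d, ‖M p.1 p.2‖ ^ 2 := by
    intro M
    rw [← inner_self_eq_norm_sq (𝕜 := ℂ)]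
    simp only [PiLp.inner_apply, RCLike.inner_apply, vec, PiLp.toLp_apply]
    simp [PiLp.inner_apply, RCLike.inner_apply, vec, Complex.mul_re, Complex.normSq_apply,
      Complex.sq_norm, PiLp.toLp_apply]
  have key : ‖vec (A * B)‖ ^ 2 ≤ (‖vec A‖ * ‖vec B‖) ^ 2 := by
    rw [h1, mul_pow, h1, h1]
    have hentry : ∀ p : Fin d × Fin d, ‖(A * B) p.1 p.2‖ ^ 2 ≤
        (∑ j, ‖A p.1 j‖ ^ 2) * ∑ j, ‖B j p.2‖ ^ 2 := by
      intro p
      set x : EuclideanSpace ℂ (Fin d) := WithLp.toLp 2 (fun j => star (A p.1 j)) with hx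
      set y : EuclideanSpace ℂ (Fin d) := WithLp.toLp 2 (fun j => B j p.2) with hy
      have hinner : (inner ℂ x y : ℂ) = (A * B) p.1 p.2 := by
        simp [PiLp.inner_apply, RCLike.inner_apply, hx, hy, PiLp.toLp_apply, Matrix.mul_apply, mul_comm]
      have hxn : ‖x‖ ^ 2 = ∑ j, ‖A p.1 j‖ ^ 2 := by
        rw [← inner_self_eq_norm_sq (𝕜 := ℂ)]
        simp only [PiLp.inner_apply, RCLike.inner_apply, hx, PiLp.toLp_apply]
        simp [PiLp.inner_apply, RCLike.inner_apply, hx, Complex.mul_re, Complex.normSq_apply,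
          Complex.sq_norm, PiLp.toLp_apply]
      have hyn : ‖y‖ ^ 2 = ∑ j, ‖B j p.2‖ ^ 2 := by
        rw [← inner_self_eq_norm_sq (𝕜 := ℂ)]
        simp only [PiLp.inner_apply, RCLike.inner_apply, hy, PiLp.toLp_apply]
        simp [PiLp.inner_apply, RCLike.inner_apply, hy, Complex.mul_re, Complex.normSq_apply,
          Complex.sq_norm, PiLp.toLp_apply]
      rw [← hinner, ← hxn, ← hyn, ← mul_pow]
      exact pow_le_pow_left₀ (norm_nonneg _) (norm_inner_le_norm x y) 2
    calc ∑ p : Fin d × Fin d, ‖(A * B) p.1 p.2‖ ^ 2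
        ≤ ∑ p : Fin d × Fin d, (∑ j, ‖A p.1 j‖ ^ 2) * ∑ j, ‖B j p.2‖ ^ 2 :=
          Finset.sum_le_sum fun p _ => hentry p
      _ = (∑ p : Fin d × Fin d, ‖A p.1 p.2‖ ^ 2) * ∑ p : Fin d × Fin d, ‖B p.1 p.2‖ ^ 2 := by
          rw [Fintype.sum_prod_type, Fintype.sum_prod_type, Fintype.sum_prod_type]
          dsimp only
          rw [← Finset.sum_mul_sum]
          congr 1
          exact Finset.sum_comm
  have := Real.sqrt_le_sqrt key
  rwa [Real.sqrt_sq (norm_nonneg _), Real.sqrt_sq (by positivity)] at this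

set_option maxHeartbeats 2000000 in
/-- The main estimate, for an abstract family of Hermitian matrices containing `I/√d`. -/
lemma main_bound {n : Type} [Fintype n] (hd : 2 ≤ d) (z : n)
    (Q : n → Matrix (Fin d) (Fin d) ℂ)
    (hQH : ∀ μ, (Q μ)ᴴ = Q μ)
    (hQz : Q z = ((Real.sqrt d : ℂ))⁻¹ • 1) :
    maxBeta Q < maxAlpha Q := by
  classical
  have hd0 : (0:ℝ) < d := by positivity
  have hd2 : (2:ℝ) ≤ (d:ℝ) := by exact_mod_cast hd
  set c : ℝ := (Real.sqrt d)⁻¹ with hc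
  have hsd : Real.sqrt d * Real.sqrt d = d := Real.mul_self_sqrt (le_of_lt hd0)
  have hsdpos : 0 < Real.sqrt d := Real.sqrt_pos.mpr hd0
  have hsd1 : 1 < Real.sqrt d := by
    rw [show (1:ℝ) = Real.sqrt 1 by simp]
    exact Real.sqrt_lt_sqrt (by norm_num) (by linarith)
  have hc2 : c ^ 2 = (d:ℝ)⁻¹ := by
    rw [hc, pow_two, ← mul_inv, hsd]
  have hcpos : 0 < c := by positivity
  -- basic per-index quantities
  set s : n → ℝ := fun μ => ‖vec (Q μ)‖ with hs
  set w : n → ℝ := fun μ => ‖vec (Q μ * Q μ)‖ with hw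
  set t : n → ℝ := fun μ => rtr (Q μ) with ht
  have hsnn : ∀ μ, 0 ≤ s μ := fun μ => norm_nonneg _
  have hwnn : ∀ μ, 0 ≤ w μ := fun μ => norm_nonneg _
  -- rtr (Q μ * Q ν) bounds
  have hs_sq : ∀ μ, rtr (Q μ * Q μ) = s μ ^ 2 := by
    intro μ
    rw [hs]; dsimp only
    rw [norm_vec_sq, hQH]; rfl
  have hcs : ∀ μ ν, |rtr (Q μ * Q ν)| ≤ s μ * s ν := by
    intro μ ν
    have := abs_re_trace_le (Q μ) (Q ν)
    rwa [hQH] at this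
  have hw_le : ∀ μ, w μ ≤ s μ ^ 2 := by
    intro μ
    have := vec_mul_le (Q μ) (Q μ)
    rw [hw]; dsimp only; rw [sq]; exact this
  have hcs3 : ∀ μ ν, |rtr (Q μ * (Q ν * Q ν))| ≤ s μ * w ν := by
    intro μ ν
    have := abs_re_trace_le (Q μ) (Q ν * Q ν)
    rwa [hQH] at this
  have hcs4 : ∀ μ ν, |rtr (Q μ * Q μ * (Q ν * Q ν))| ≤ w μ * w ν := by
    intro μ ν
    have h1 := abs_re_trace_le (Q μ * Q μ) (Q ν * Q ν)
    have h2 : (Q μ * Q μ)ᴴ = Q μ * Q μ := by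
      rw [Matrix.conjTranspose_mul, hQH]
    rwa [h2] at h1
  have hWsq : ∀ μ ν, ‖vec (Q μ * Q ν)‖ ^ 2 = rtr (Q μ * Q μ * (Q ν * Q ν)) := by
    intro μ ν
    rw [norm_vec_sq, Matrix.conjTranspose_mul, hQH, hQH]
    have e1 : Q ν * Q μ * (Q μ * Q ν) = Q ν * (Q μ * Q μ * Q ν) := by
      simp only [Matrix.mul_assoc]
    have e2 : Q μ * Q μ * Q ν * Q ν = Q μ * Q μ * (Q ν * Q ν) := by
      simp only [Matrix.mul_assoc]
    rw [e1, Matrix.trace_mul_comm, e2]; rfl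
  have hcs5 : ∀ μ ν, |rtr (Q μ * Q ν * Q μ * Q ν)| ≤ w μ * w ν := by
    intro μ ν
    have hconj : (Q ν * Q μ)ᴴ = Q μ * Q ν := by
      rw [Matrix.conjTranspose_mul, hQH, hQH]
    have h1 : |rtr (Q μ * Q ν * Q μ * Q ν)| ≤ ‖vec (Q ν * Q μ)‖ * ‖vec (Q μ * Q ν)‖ := by
      have := abs_re_trace_le (Q ν * Q μ) (Q μ * Q ν)
      rw [hconj] at this
      have he : Q μ * Q ν * (Q μ * Q ν) = Q μ * Q ν * Q μ * Q ν := by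
        simp only [Matrix.mul_assoc]
      rwa [he] at this
    have h2 : ‖vec (Q μ * Q ν)‖ ^ 2 ≤ w μ * w ν := by
      rw [hWsq]
      exact le_trans (le_abs_self _) (hcs4 μ ν)
    have h3 : ‖vec (Q ν * Q μ)‖ ^ 2 ≤ w μ * w ν := by
      rw [hWsq]
      calc rtr (Q ν * Q ν * (Q μ * Q μ)) ≤ |rtr (Q ν * Q ν * (Q μ * Q μ))| := le_abs_self _
        _ ≤ w ν * w μ := hcs4 ν μ
        _ = w μ * w ν := mul_comm _ _
    nlinarith [norm_nonneg (vec (Q μ * Q ν)), norm_nonneg (vec (Q ν * Q μ)),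
      sq_nonneg (‖vec (Q μ * Q ν)‖ - ‖vec (Q ν * Q μ)‖)]
  -- facts about the distinguished index z
  have hQzr : Q z = (c : ℂ) • 1 := by rw [hQz, hc, Complex.ofReal_inv]
  have htrone : Matrix.trace (1 : Matrix (Fin d) (Fin d) ℂ) = (d : ℂ) := by
    simp [Matrix.trace_one]
  have hrtr_smul : ∀ (r : ℝ) (M : Matrix (Fin d) (Fin d) ℂ), rtr ((r : ℂ) • M) = r * rtr M := by
    intro r M
    simp [rtr, Matrix.trace_smul, smul_eq_mul, Complex.mul_re]
  have hrtr_one : rtr (1 : Matrix (Fin d) (Fin d) ℂ) = d := by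
    simp [rtr, htrone]
  have htz : t z = Real.sqrt d := by
    show rtr (Q z) = _
    rw [hQzr, hrtr_smul, hrtr_one, hc, inv_mul_eq_div, div_eq_iff (ne_of_gt hsdpos)]
    exact hsd.symm
  have hQzsq : Q z * Q z = ((c * c : ℝ) : ℂ) • 1 := by
    rw [hQzr, smul_mul_assoc, mul_smul_comm, one_mul, smul_smul]
    norm_cast
  have hszsq : rtr (Q z * Q z) = c ^ 2 * d := by
    rw [hQzsq, hrtr_smul, hrtr_one]; ring
  have hsz : s z = 1 := by
    have h2 : s z ^ 2 = 1 := by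
      rw [← hs_sq z, hszsq, hc2]
      field_simp
    rw [← Real.sqrt_sq (hsnn z), h2, Real.sqrt_one]
  have hwz2 : w z ^ 2 ≤ 1 / 2 := by
    have h1 : w z ^ 2 = rtr (Q z * Q z * (Q z * Q z)) := hWsq z z
    have hQz4 : Q z * Q z * (Q z * Q z) = ((c * c * (c * c) : ℝ) : ℂ) • 1 := by
      rw [hQzsq, smul_mul_assoc, mul_smul_comm, one_mul, smul_smul]
      norm_cast
    have h2 : rtr (Q z * Q z * (Q z * Q z)) = (c ^ 2) ^ 2 * d := by
      rw [hQz4, hrtr_smul, hrtr_one]; ring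
    rw [h1, h2, hc2]
    rw [show ((d:ℝ)⁻¹) ^ 2 * d = (d:ℝ)⁻¹ by field_simp]
    rw [inv_le_comm₀ hd0 (by norm_num)]
    linarith
  have hwzle : w z ≤ 3 / 4 := by nlinarith only [hwz2, hwnn z]
  -- sum splitting
  set E := (Finset.univ : Finset n).erase z with hE
  have hsplit : ∀ f : n → ℝ, ∑ μ, f μ = f z + ∑ μ ∈ E, f μ := by
    intro f
    rw [hE]
    exact (Finset.add_sum_erase _ f (Finset.mem_univ z)).symm
  have hsplit2 : ∀ F : n → n → ℝ, ∑ μ, ∑ ν, F μ ν =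
      F z z + ∑ ν ∈ E, F z ν + (∑ μ ∈ E, F μ z + ∑ μ ∈ E, ∑ ν ∈ E, F μ ν) := by
    intro F
    rw [hsplit (fun μ => ∑ ν, F μ ν)]
    rw [hsplit (F z)]
    rw [Finset.sum_congr rfl (fun μ _ => hsplit (F μ)), Finset.sum_add_distrib]
  set u' := ∑ μ ∈ E, t μ ^ 2 with hu'
  set v' := ∑ μ ∈ E, s μ ^ 2 with hv'
  have hu0 : 0 ≤ u' := Finset.sum_nonneg fun _ _ => sq_nonneg _
  have hv0 : 0 ≤ v' := Finset.sum_nonneg fun _ _ => sq_nonneg _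
  have ha1 : alpha1 Q = d + u' := by
    have h1 : alpha1 Q = ∑ μ, t μ ^ 2 := by simp [alpha1, ht]
    rw [h1, hsplit (fun μ => t μ ^ 2), htz]
    rw [Real.sq_sqrt (le_of_lt hd0)]
  have ha2 : alpha2 Q = 1 + v' := by
    have h1 : alpha2 Q = ∑ μ, s μ ^ 2 := by
      rw [alpha2]
      exact Finset.sum_congr rfl fun μ _ => hs_sq μ
    rw [h1, hsplit (fun μ => s μ ^ 2), hsz]
    norm_num
    rfl
  set a := max (alpha1 Q) (alpha2 Q) with ha
  have ha1le : alpha1 Q ≤ a := le_max_left _ _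
  have ha2le : alpha2 Q ≤ a := le_max_right _ _
  have had : (d : ℝ) ≤ a := by rw [ha1] at ha1le; linarith only [ha1le, hu0]
  have haR : (2 : ℝ) ≤ a := le_trans hd2 had
  have hule : u' ≤ a - d := by rw [ha1] at ha1le; linarith only [ha1le]
  have hvle : v' ≤ a - 1 := by rw [ha2] at ha2le; linarith only [ha2le]
  -- |t μ| ≤ √d * s μ
  have hvec1 : ‖vec (1 : Matrix (Fin d) (Fin d) ℂ)‖ = Real.sqrt d := by
    have h1 := norm_vec_sq (1 : Matrix (Fin d) (Fin d) ℂ)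
    rw [Matrix.conjTranspose_one, one_mul, htrone] at h1
    rw [← Real.sqrt_sq (norm_nonneg _), h1]
    rfl
  have htle : ∀ μ, |t μ| ≤ Real.sqrt d * s μ := by
    intro μ
    have h1 := abs_re_trace_le (1 : Matrix (Fin d) (Fin d) ℂ) (Q μ)
    rw [Matrix.conjTranspose_one, one_mul, hvec1] at h1
    exact h1
  have ht2 : ∀ μ, t μ ^ 2 ≤ d * s μ ^ 2 := by
    intro μ
    have h1 := htle μ
    nlinarith only [h1, hsnn μ, abs_nonneg (t μ), sq_abs (t μ), hsd, Real.sqrt_nonneg (d:ℝ)]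
  have hug : u' ≤ d * v' := by
    rw [hu', hv', Finset.mul_sum]
    exact Finset.sum_le_sum fun μ _ => ht2 μ
  -- z-row values
  have hzrow : ∀ ν, rtr (Q z * Q ν) = c * t ν := by
    intro ν
    rw [hQzr, smul_mul_assoc, one_mul, hrtr_smul]
  have hzcol : ∀ ν, rtr (Q ν * Q z) = c * t ν := by
    intro ν
    rw [hQzr, mul_smul_comm, mul_one, hrtr_smul]
  -- the weighted sum S := ∑ s|t|
  set SE := ∑ μ ∈ E, s μ * |t μ| with hSE
  have hSEnn : 0 ≤ SE := Finset.sum_nonneg fun μ _ => mul_nonneg (hsnn μ) (abs_nonneg _)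
  have hSE2 : SE ^ 2 ≤ v' * u' := by
    calc SE ^ 2 ≤ (∑ μ ∈ E, s μ ^ 2) * ∑ μ ∈ E, |t μ| ^ 2 :=
          Finset.sum_mul_sq_le_sq_mul_sq E s (fun μ => |t μ|)
      _ = v' * u' := by
          rw [hv', hu']
          congr 1
          exact Finset.sum_congr rfl fun μ _ => sq_abs (t μ)
  have hSEle : SE ≤ (u' + v') / 2 := by
    have hM : 0 ≤ (u' + v') / 2 := by linarith only [hu0, hv0]
    have h : SE ^ 2 ≤ ((u' + v') / 2) ^ 2 := by nlinarith only [hSE2, sq_nonneg (u' - v')]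
    calc SE = Real.sqrt (SE ^ 2) := (Real.sqrt_sq hSEnn).symm
      _ ≤ Real.sqrt (((u' + v') / 2) ^ 2) := Real.sqrt_le_sqrt h
      _ = (u' + v') / 2 := Real.sqrt_sq hM
  have hS1 : (∑ μ, s μ * |t μ|) = Real.sqrt d + SE := by
    rw [hsplit (fun μ => s μ * |t μ|), hsz, htz, one_mul, abs_of_pos hsdpos]
  -- β₂ bound
  have hb2 : |beta2 Q| ≤ (Real.sqrt d + SE) ^ 2 := by
    rw [← hS1, beta2, sq, Finset.sum_mul_sum]
    calc |∑ μ, ∑ ν, rtr (Q μ * Q ν) * rtr (Q μ) * rtr (Q ν)|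
        ≤ ∑ μ, |∑ ν, rtr (Q μ * Q ν) * rtr (Q μ) * rtr (Q ν)| :=
          Finset.abs_sum_le_sum_abs _ _
      _ ≤ ∑ μ, ∑ ν, |rtr (Q μ * Q ν) * rtr (Q μ) * rtr (Q ν)| :=
          Finset.sum_le_sum fun μ _ => Finset.abs_sum_le_sum_abs _ _
      _ ≤ ∑ μ, ∑ ν, s μ * |t μ| * (s ν * |t ν|) := by
          apply Finset.sum_le_sum; intro μ _
          apply Finset.sum_le_sum; intro ν _
          calc |rtr (Q μ * Q ν) * rtr (Q μ) * rtr (Q ν)|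
              = |rtr (Q μ * Q ν)| * |t μ| * |t ν| := by
                rw [abs_mul, abs_mul]
            _ ≤ s μ * s ν * |t μ| * |t ν| :=
                mul_le_mul_of_nonneg_right
                  (mul_le_mul_of_nonneg_right (hcs μ ν) (abs_nonneg _)) (abs_nonneg _)
            _ = s μ * |t μ| * (s ν * |t ν|) := by ring
  -- β₃ bound
  have hb3 : |beta3 Q| ≤ (Real.sqrt d + SE) * (1 + v') := by
    have hsum2 : (∑ ν, s ν ^ 2) = 1 + v' := by
      rw [hsplit (fun ν => s ν ^ 2), hsz]; norm_num; rfl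
    rw [← hS1, ← hsum2, beta3, Finset.sum_mul_sum]
    calc |∑ μ, ∑ ν, rtr (Q μ * (Q ν * Q ν)) * rtr (Q μ)|
        ≤ ∑ μ, ∑ ν, |rtr (Q μ * (Q ν * Q ν)) * rtr (Q μ)| :=
          le_trans (Finset.abs_sum_le_sum_abs _ _)
            (Finset.sum_le_sum fun μ _ => Finset.abs_sum_le_sum_abs _ _)
      _ ≤ ∑ μ, ∑ ν, s μ * |t μ| * s ν ^ 2 := by
          apply Finset.sum_le_sum; intro μ _
          apply Finset.sum_le_sum; intro ν _
          calc |rtr (Q μ * (Q ν * Q ν)) * rtr (Q μ)|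
              = |rtr (Q μ * (Q ν * Q ν))| * |t μ| := by rw [abs_mul]
            _ ≤ s μ * w ν * |t μ| :=
                mul_le_mul_of_nonneg_right (hcs3 μ ν) (abs_nonneg _)
            _ ≤ s μ * s ν ^ 2 * |t μ| :=
                mul_le_mul_of_nonneg_right
                  (mul_le_mul_of_nonneg_left (hw_le ν) (hsnn μ)) (abs_nonneg _)
            _ = s μ * |t μ| * s ν ^ 2 := by ring
  -- β₁ bound
  have hb1 : beta1 Q ≤ 1 + c ^ 2 * u' + (c ^ 2 * u' + v' * v') := by
    rw [beta1, hsplit2 (fun μ ν => rtr (Q μ * Q ν) ^ 2)]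
    have e0 : rtr (Q z * Q z) ^ 2 = 1 := by rw [hs_sq z, hsz]; norm_num
    have erow : (∑ ν ∈ E, rtr (Q z * Q ν) ^ 2) = c ^ 2 * u' := by
      rw [hu', Finset.mul_sum]
      apply Finset.sum_congr rfl
      intro ν _
      rw [hzrow ν]; ring
    have ecol : (∑ μ ∈ E, rtr (Q μ * Q z) ^ 2) = c ^ 2 * u' := by
      rw [hu', Finset.mul_sum]
      apply Finset.sum_congr rfl
      intro ν _
      rw [hzcol ν]; ring
    have ebulk : (∑ μ ∈ E, ∑ ν ∈ E, rtr (Q μ * Q ν) ^ 2) ≤ v' * v' := by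
      rw [hv', Finset.sum_mul_sum]
      apply Finset.sum_le_sum; intro μ _
      apply Finset.sum_le_sum; intro ν _
      have h1 := hcs μ ν
      nlinarith only [h1, abs_nonneg (rtr (Q μ * Q ν)), sq_abs (rtr (Q μ * Q ν)), hsnn μ, hsnn ν]
    rw [e0, erow, ecol]
    linarith only [ebulk]
  have hb1nn : 0 ≤ beta1 Q := by
    rw [beta1]
    exact Finset.sum_nonneg fun μ _ => Finset.sum_nonneg fun ν _ => sq_nonneg _
  -- β₄ and β₅ bounds
  have hsumw : (∑ μ, w μ) ≤ w z + v' := by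
    rw [hsplit w]
    have : (∑ μ ∈ E, w μ) ≤ v' := by
      rw [hv']
      exact Finset.sum_le_sum fun μ _ => hw_le μ
    linarith only [this]
  have hsumwnn : 0 ≤ ∑ μ, w μ := Finset.sum_nonneg fun μ _ => hwnn μ
  have hb4 : |beta4 Q| ≤ (w z + v') ^ 2 := by
    have h1 : |beta4 Q| ≤ (∑ μ, w μ) ^ 2 := by
      rw [beta4, sq, Finset.sum_mul_sum]
      calc |∑ μ, ∑ ν, rtr (Q μ * Q μ * (Q ν * Q ν))|
          ≤ ∑ μ, ∑ ν, |rtr (Q μ * Q μ * (Q ν * Q ν))| :=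
            le_trans (Finset.abs_sum_le_sum_abs _ _)
              (Finset.sum_le_sum fun μ _ => Finset.abs_sum_le_sum_abs _ _)
        _ ≤ ∑ μ, ∑ ν, w μ * w ν :=
            Finset.sum_le_sum fun μ _ => Finset.sum_le_sum fun ν _ => hcs4 μ ν
    calc |beta4 Q| ≤ (∑ μ, w μ) ^ 2 := h1
      _ ≤ (w z + v') ^ 2 := pow_le_pow_left₀ hsumwnn hsumw 2
  have hb5 : |beta5 Q| ≤ (w z + v') ^ 2 := by
    have h1 : |beta5 Q| ≤ (∑ μ, w μ) ^ 2 := by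
      rw [beta5, sq, Finset.sum_mul_sum]
      calc |∑ μ, ∑ ν, rtr (Q μ * Q ν * Q μ * Q ν)|
          ≤ ∑ μ, ∑ ν, |rtr (Q μ * Q ν * Q μ * Q ν)| :=
            le_trans (Finset.abs_sum_le_sum_abs _ _)
              (Finset.sum_le_sum fun μ _ => Finset.abs_sum_le_sum_abs _ _)
        _ ≤ ∑ μ, ∑ ν, w μ * w ν :=
            Finset.sum_le_sum fun μ _ => Finset.sum_le_sum fun ν _ => hcs5 μ ν
    calc |beta5 Q| ≤ (∑ μ, w μ) ^ 2 := h1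
      _ ≤ (w z + v') ^ 2 := pow_le_pow_left₀ hsumwnn hsumw 2
  -- now the five strict inequalities against a²
  have hcd : c ^ 2 * d = 1 := by rw [hc2]; field_simp
  have hq := hsd
  have strict1 : |beta1 Q| < a ^ 2 := by
    rw [abs_of_nonneg hb1nn]
    by_cases hcase : u' ≤ d * v' - d / 2
    · have h1 : c ^ 2 * u' ≤ v' - 1 / 2 := by
        have h := mul_le_mul_of_nonneg_left hcase (sq_nonneg c)
        calc c ^ 2 * u' ≤ c ^ 2 * (d * v' - d / 2) := h
          _ = (c ^ 2 * d) * v' - (c ^ 2 * d) / 2 := by ring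
          _ = v' - 1 / 2 := by rw [hcd]; ring
      have h2 : (1 + v') ^ 2 ≤ a ^ 2 := pow_le_pow_left₀ (by linarith only [hv0]) (by linarith only [hvle]) 2
      linarith only [hb1, h1, h2, sq_nonneg (1 + v'), show (1+v')^2 = 1 + 2*v' + v'*v' from by ring]
    · push_neg at hcase
      have hcu : c ^ 2 * u' ≤ v' := by
        have h := mul_le_mul_of_nonneg_left hug (sq_nonneg c)
        calc c ^ 2 * u' ≤ c ^ 2 * (d * v') := h
          _ = (c ^ 2 * d) * v' := by ring
          _ = v' := by rw [hcd]; ring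
      have key : 1 + v' < d + u' := by
        have hp : 0 ≤ ((d : ℝ) - 1) * v' := mul_nonneg (by linarith) hv0
        have hp' : ((d : ℝ) - 1) * v' = d * v' - v' := by ring
        linarith only [hcase, hp, hp', hd2]
      have h2 : (1 + v') ^ 2 < a ^ 2 := by
        have h4 : 1 + v' < a := by rw [ha1] at ha1le; linarith only [ha1le, key]
        nlinarith only [hv0, h4]
      linarith only [hb1, hcu, h2, show (1+v')^2 = 1 + 2*v' + v'*v' from by ring]
  have strict2 : |beta2 Q| < a ^ 2 := by
    have hgpos : 0 < (d + 1) / 2 - Real.sqrt d := by nlinarith only [hsd1, hq]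
    have hle : Real.sqrt d + SE ≤ a - ((d + 1) / 2 - Real.sqrt d) := by
      linarith only [hSEle, hule, hvle]
    have hnn : 0 ≤ Real.sqrt d + SE := by have := Real.sqrt_nonneg (d:ℝ); linarith only [this, hSEnn]
    have hsq : (Real.sqrt d + SE) ^ 2 ≤ (a - ((d + 1) / 2 - Real.sqrt d)) ^ 2 :=
      pow_le_pow_left₀ hnn hle 2
    have h2a : (d + 1) / 2 - Real.sqrt d < 2 * a := by
      have := Real.sqrt_nonneg (d : ℝ)
      linarith only [this, had, hd2]
    have hfin : (a - ((d + 1) / 2 - Real.sqrt d)) ^ 2 < a ^ 2 := by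
      nlinarith only [hgpos, h2a]
    linarith only [hb2, hsq, hfin]
  have strict3 : |beta3 Q| < a ^ 2 := by
    have hgpos : 0 < (d + 1) / 2 - Real.sqrt d := by nlinarith only [hsd1, hq]
    have hle : Real.sqrt d + SE ≤ a - ((d + 1) / 2 - Real.sqrt d) := by
      linarith only [hSEle, hule, hvle]
    have hnn : 0 ≤ Real.sqrt d + SE := by have := Real.sqrt_nonneg (d:ℝ); linarith only [this, hSEnn]
    have h1v : 1 + v' ≤ a := by rw [ha2] at ha2le; linarith only [ha2le]
    have hmul : (Real.sqrt d + SE) * (1 + v') ≤ (a - ((d + 1) / 2 - Real.sqrt d)) * a := by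
      apply mul_le_mul hle h1v (by linarith only [hv0]) (by linarith only [had, hd2, Real.sqrt_nonneg (d:ℝ)])
    have hfin : (a - ((d + 1) / 2 - Real.sqrt d)) * a < a ^ 2 := by
      nlinarith only [mul_pos hgpos (show (0:ℝ) < a by linarith only [haR])]
    linarith only [hb3, hmul, hfin]
  have strict45aux : (w z + v') ^ 2 < a ^ 2 := by
    have h1 : w z + v' ≤ a - 1 / 4 := by linarith only [hwzle, hvle]
    have h2 : 0 ≤ w z + v' := by linarith only [hwnn z, hv0]
    have h3 : (w z + v') ^ 2 ≤ (a - 1 / 4) ^ 2 := pow_le_pow_left₀ h2 h1 2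
    linarith only [haR, h3, show (a - 1/4)^2 = a^2 - a/2 + 1/16 from by ring]
  have strict4 : |beta4 Q| < a ^ 2 := lt_of_le_of_lt hb4 strict45aux
  have strict5 : |beta5 Q| < a ^ 2 := lt_of_le_of_lt hb5 strict45aux
  -- conclusion
  have hmaxb : maxBeta Q < a ^ 2 := by
    rw [maxBeta]
    exact max_lt strict1 (max_lt strict2 (max_lt strict3 (max_lt strict4 strict5)))
  have hmaxa : a ^ 2 ≤ maxAlpha Q := by
    have h1pos : 0 < alpha1 Q := by rw [ha1]; linarith only [hd2, hu0]
    have h2pos : 0 < alpha2 Q := by rw [ha2]; linarith only [hv0]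
    rcases le_total (alpha1 Q) (alpha2 Q) with h | h
    · have : a = alpha2 Q := max_eq_right h
      rw [this, maxAlpha]
      have : |alpha2 Q * alpha2 Q| = alpha2 Q ^ 2 := by
        rw [abs_of_pos (mul_pos h2pos h2pos), sq]
      rw [← this]
      exact le_max_of_le_right (le_max_right _ _)
    · have : a = alpha1 Q := max_eq_left h
      rw [this, maxAlpha]
      have : |alpha1 Q * alpha1 Q| = alpha1 Q ^ 2 := by
        rw [abs_of_pos (mul_pos h1pos h1pos), sq]
      rw [← this]
      exact le_max_of_le_left (le_max_left _ _)
  exact lt_of_lt_of_le hmaxb hmaxa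

end QCAux

/-- For a single-qudit channel (d ≥ 2) with Kraus operators (K_i), orthonormal
Hermitian basis (σ_μ) containing σ₀ = I/√d, and Q_μ = ∑_i K_i† σ_μ K_i:
max_u |b_u| < max_{i,j} |a_i a_j|, and consequently
(max_u |b_u|)^N / (max_{i,j} |a_i a_j|)^N → 0 as N → ∞. -/
theorem qudit_channel_typicality {d : ℕ} (hd : 2 ≤ d) {J : Type} [Fintype J]
    (K : J → Matrix (Fin d) (Fin d) ℂ)
    (hK : ∑ i, (K i)ᴴ * K i = 1)
    (σ : Fin (d * d) → Matrix (Fin d) (Fin d) ℂ)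
    (hσHerm : ∀ μ, (σ μ).IsHermitian)
    (hσON : ∀ μ ν, Matrix.trace ((σ μ)ᴴ * σ ν) = if μ = ν then 1 else 0)
    (hσ0 : σ ⟨0, by positivity⟩ = ((Real.sqrt d : ℂ))⁻¹ • (1 : Matrix (Fin d) (Fin d) ℂ)) :
    maxBeta (fun μ => ∑ i, (K i)ᴴ * σ μ * K i) <
        maxAlpha (fun μ => ∑ i, (K i)ᴴ * σ μ * K i) ∧
      Filter.Tendsto
        (fun N : ℕ => (maxBeta (fun μ => ∑ i, (K i)ᴴ * σ μ * K i)) ^ N /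
          (maxAlpha (fun μ => ∑ i, (K i)ᴴ * σ μ * K i)) ^ N)
        Filter.atTop (nhds 0) := by

  have hd0 : 0 < d * d := Nat.mul_pos (by omega) (by omega)
  set Q : Fin (d * d) → Matrix (Fin d) (Fin d) ℂ :=
    fun μ => ∑ i, (K i)ᴴ * σ μ * K i with hQdef
  have hQH : ∀ μ, (Q μ)ᴴ = Q μ := by
    intro μ
    rw [hQdef]
    dsimp only
    rw [Matrix.conjTranspose_sum]
    apply Finset.sum_congr rfl
    intro i _
    rw [Matrix.conjTranspose_mul, Matrix.conjTranspose_mul, Matrix.conjTranspose_conjTranspose,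
      (hσHerm μ).eq, Matrix.mul_assoc]
  have hQz : Q ⟨0, hd0⟩ = ((Real.sqrt d : ℂ))⁻¹ • 1 := by
    rw [hQdef]
    dsimp only
    rw [show σ ⟨0, hd0⟩ = ((Real.sqrt d : ℂ))⁻¹ • (1 : Matrix (Fin d) (Fin d) ℂ) from hσ0]
    calc (∑ i, (K i)ᴴ * (((Real.sqrt d : ℂ))⁻¹ • 1) * K i)
        = ∑ i, ((Real.sqrt d : ℂ))⁻¹ • ((K i)ᴴ * K i) := by
          apply Finset.sum_congr rfl
          intro i _
          rw [mul_smul_comm, mul_one, smul_mul_assoc]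
      _ = ((Real.sqrt d : ℂ))⁻¹ • (1 : Matrix (Fin d) (Fin d) ℂ) := by
          rw [← Finset.smul_sum, hK]
  have key := QCAux.main_bound hd (⟨0, hd0⟩ : Fin (d * d)) Q hQH hQz
  refine ⟨key, ?_⟩
  have hBnn : 0 ≤ maxBeta Q := le_trans (abs_nonneg _) (le_max_left _ _)
  have hApos : 0 < maxAlpha Q := lt_of_le_of_lt hBnn key
  have hlt : maxBeta Q / maxAlpha Q < 1 := (div_lt_one hApos).mpr key
  have hnn : 0 ≤ maxBeta Q / maxAlpha Q := div_nonneg hBnn (le_of_lt hApos)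
  have h := tendsto_pow_atTop_nhds_zero_of_lt_one hnn hlt
  simpa [div_pow] using h
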